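/- Let b > 0, a > 0, T ≥ 1, and let c_1,…,c_T be real numbers with 0 ≤ c_t ≤ b for all t. Define γ_t = min( √((b + Σ_{s=1}^{t−1} c_s)/t), 1 ) for each t ∈ [T]. Then Σ_{t=1}^T ( γ_t + a · c_t/γ_t ) ≤ (2 + 2a) √T · √(b + Σ_{t=1}^T c_t) + a · Σ_{t=1}^T c_t. -/
import Mathlib


open Finset

theorem adaptive_exploration_rate_bound
    (b a : ℝ) (hb : 0 < b) (ha : 0 < a)
    (T : ℕ) (hT : 1 ≤ T)
    (c : ℕ → ℝ) (hc : ∀ t < T, 0 ≤ c t ∧ c t ≤ b)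
    (γ : ℕ → ℝ)
    (hγ : ∀ t, γ t = min (Real.sqrt ((b + ∑ s ∈ Finset.range t, c s) / (t + 1))) 1) :
    ∑ t ∈ Finset.range T, (γ t + a * (c t / γ t))
      ≤ (2 + 2 * a) * Real.sqrt T * Real.sqrt (b + ∑ t ∈ Finset.range T, c t)
        + a * ∑ t ∈ Finset.range T, c t := by
  set U : ℕ → ℝ := fun t => ∑ s ∈ Finset.range t, c s with hU
  have hUeq : ∀ t, U t = ∑ s ∈ Finset.range t, c s := fun t => by rw [hU]
  have hU0 : ∀ t, t ≤ T → 0 ≤ U t := by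
    intro t ht
    rw [hUeq]
    exact Finset.sum_nonneg fun s hs => (hc s (lt_of_lt_of_le (Finset.mem_range.mp hs) ht)).1
  have hUle : ∀ t, t ≤ T → U t ≤ U T := by
    intro t ht
    rw [hUeq, hUeq]
    apply Finset.sum_le_sum_of_subset_of_nonneg (Finset.range_subset_range.mpr ht)
    intro s hs _
    exact (hc s (Finset.mem_range.mp hs)).1
  set f : ℕ → ℝ := fun n => Real.sqrt n with hf
  set g : ℕ → ℝ := fun n => Real.sqrt (U n) with hg
  set A : ℝ := Real.sqrt (b + U T) with hA
  have hAnn : 0 ≤ A := Real.sqrt_nonneg _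
  have key : ∀ t ∈ Finset.range T,
      γ t + a * (c t / γ t)
        ≤ 2 * A * (f (t+1) - f t) + a * (2 * Real.sqrt T * (g (t+1) - g t) + c t) := by
    intro t ht
    have htT : t < T := Finset.mem_range.mp ht
    obtain ⟨hc0, hcb⟩ := hc t htT
    have hUt : 0 ≤ U t := hU0 t htT.le
    have hUt1 : U (t+1) = U t + c t := by rw [hUeq, hUeq]; exact Finset.sum_range_succ c t
    have hSt : (0:ℝ) < b + U t := by linarith
    have htp : (0:ℝ) < (t:ℝ) + 1 := by positivity
    have hγt : γ t = min (Real.sqrt ((b + U t) / ((t:ℝ) + 1))) 1 := by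
      rw [hγ t, hUeq]
    have hxpos : 0 < Real.sqrt ((b + U t) / ((t:ℝ) + 1)) :=
      Real.sqrt_pos.mpr (div_pos hSt htp)
    have hγpos : 0 < γ t := by rw [hγt]; exact lt_min hxpos one_pos
    have hsplit : Real.sqrt ((b + U t) / ((t:ℝ) + 1))
        = Real.sqrt (b + U t) / Real.sqrt ((t:ℝ) + 1) := Real.sqrt_div hSt.le _
    have hsp : 0 < Real.sqrt ((t:ℝ)+1) := Real.sqrt_pos.mpr htp
    have hfc1 : f (t+1) = Real.sqrt ((t:ℝ)+1) := by rw [hf]; push_cast; ring_nf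
    have hfc0 : f t = Real.sqrt (t:ℝ) := by rw [hf]
    have h1 : 1 ≤ 2 * (Real.sqrt ((t:ℝ)+1) - Real.sqrt (t:ℝ)) * Real.sqrt ((t:ℝ)+1) := by
      have ht0 : (0:ℝ) ≤ t := Nat.cast_nonneg t
      have e1 : Real.sqrt (t:ℝ) ^ 2 = (t:ℝ) := Real.sq_sqrt ht0
      have e2 : Real.sqrt ((t:ℝ)+1) ^ 2 = (t:ℝ)+1 := Real.sq_sqrt (by linarith)
      nlinarith [sq_nonneg (Real.sqrt ((t:ℝ)+1) - Real.sqrt (t:ℝ)), Real.sqrt_nonneg (t:ℝ),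
        Real.sqrt_nonneg ((t:ℝ)+1)]
    -- part 1 : γ t ≤ 2 A (√(t+1) - √t)
    have part1 : γ t ≤ 2 * A * (f (t+1) - f t) := by
      rw [hfc1, hfc0]
      have h2 : γ t ≤ Real.sqrt (b + U t) / Real.sqrt ((t:ℝ)+1) := by
        rw [hγt, hsplit]; exact min_le_left _ _
      have h3 : Real.sqrt (b + U t) ≤ A := by
        rw [hA]; exact Real.sqrt_le_sqrt (by have := hUle t htT.le; linarith)
      have h4 : Real.sqrt (b + U t) / Real.sqrt ((t:ℝ)+1) ≤ A / Real.sqrt ((t:ℝ)+1) := by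
        gcongr
      have h5 : A / Real.sqrt ((t:ℝ)+1) ≤ 2 * A * (Real.sqrt ((t:ℝ)+1) - Real.sqrt (t:ℝ)) := by
        rw [div_le_iff₀ hsp]
        nlinarith [mul_le_mul_of_nonneg_left h1 hAnn]
      linarith
    -- part 2 : c t / γ t ≤ 2 √T (g(t+1) - g t) + c t
    have hUt1nn : 0 ≤ U (t+1) := by rw [hUt1]; linarith
    have huv : Real.sqrt (U t) ≤ Real.sqrt (U (t+1)) :=
      Real.sqrt_le_sqrt (by rw [hUt1]; linarith)
    have hvw : Real.sqrt (U (t+1)) ≤ Real.sqrt (b + U t) :=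
      Real.sqrt_le_sqrt (by rw [hUt1]; linarith)
    have hwpos : 0 < Real.sqrt (b + U t) := Real.sqrt_pos.mpr hSt
    have hd : c t / Real.sqrt (b + U t) ≤ 2 * (Real.sqrt (U (t+1)) - Real.sqrt (U t)) := by
      have hu2 : Real.sqrt (U t) ^ 2 = U t := Real.sq_sqrt hUt
      have hv2 : Real.sqrt (U (t+1)) ^ 2 = U (t+1) := Real.sq_sqrt hUt1nn
      rw [div_le_iff₀ hwpos]
      nlinarith [mul_nonneg (sub_nonneg.mpr huv) (sub_nonneg.mpr hvw),
        mul_nonneg (sub_nonneg.mpr huv) (sub_nonneg.mpr (huv.trans hvw))]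
    have hst : Real.sqrt ((t:ℝ)+1) ≤ Real.sqrt (T:ℝ) := by
      apply Real.sqrt_le_sqrt
      have : (t+1 : ℕ) ≤ T := htT
      exact_mod_cast this
    have hinv : 1 / γ t ≤ Real.sqrt ((t:ℝ)+1) / Real.sqrt (b + U t) + 1 := by
      have hxinv : 1 / Real.sqrt ((b + U t) / ((t:ℝ) + 1))
          = Real.sqrt ((t:ℝ)+1) / Real.sqrt (b + U t) := by
        rw [hsplit, one_div_div]
      rw [hγt]
      rcases le_total (Real.sqrt ((b + U t) / ((t:ℝ) + 1))) 1 with h | h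
      · rw [min_eq_left h, ← hxinv]
        linarith
      · rw [min_eq_right h, ← hxinv]
        have : 0 ≤ 1 / Real.sqrt ((b + U t) / ((t:ℝ) + 1)) := by positivity
        linarith
    have hchain : c t / γ t ≤ 2 * Real.sqrt (T:ℝ) * (g (t+1) - g t) + c t := by
      have e1 : c t / γ t = c t * (1 / γ t) := by rw [mul_one_div]
      have e2 := mul_le_mul_of_nonneg_left hinv hc0
      have e3 : c t * (Real.sqrt ((t:ℝ)+1) / Real.sqrt (b + U t) + 1)
          = (c t / Real.sqrt (b + U t)) * Real.sqrt ((t:ℝ)+1) + c t := by ring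
      have e4 : (c t / Real.sqrt (b + U t)) * Real.sqrt ((t:ℝ)+1)
          ≤ (2 * (Real.sqrt (U (t+1)) - Real.sqrt (U t))) * Real.sqrt (T:ℝ) := by
        apply mul_le_mul hd hst (Real.sqrt_nonneg _) (by linarith)
      have hgc1 : g (t+1) = Real.sqrt (U (t+1)) := by rw [hg]
      have hgc0 : g t = Real.sqrt (U t) := by rw [hg]
      rw [e1, hgc1, hgc0]
      calc c t * (1 / γ t) ≤ c t * (Real.sqrt ((t:ℝ)+1) / Real.sqrt (b + U t) + 1) := e2
        _ = (c t / Real.sqrt (b + U t)) * Real.sqrt ((t:ℝ)+1) + c t := e3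
        _ ≤ (2 * (Real.sqrt (U (t+1)) - Real.sqrt (U t))) * Real.sqrt (T:ℝ) + c t := by
            linarith
        _ = 2 * Real.sqrt (T:ℝ) * (Real.sqrt (U (t+1)) - Real.sqrt (U t)) + c t := by ring
    have := mul_le_mul_of_nonneg_left hchain ha.le
    linarith
  have hsum := Finset.sum_le_sum key
  have e1 : ∑ t ∈ Finset.range T, (f (t+1) - f t) = f T - f 0 := Finset.sum_range_sub f T
  have e2 : ∑ t ∈ Finset.range T, (g (t+1) - g t) = g T - g 0 := Finset.sum_range_sub g T
  have hf0 : f 0 = 0 := by rw [hf]; simp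
  have hg0 : g 0 = 0 := by simp [hg, hUeq]
  have hfT : f T = Real.sqrt (T:ℝ) := by rw [hf]
  have hgT : g T = Real.sqrt (U T) := by rw [hg]
  have hUT : ∑ t ∈ Finset.range T, c t = U T := (hUeq T).symm
  have hsum2 : ∑ t ∈ Finset.range T,
      (2 * A * (f (t+1) - f t) + a * (2 * Real.sqrt (T:ℝ) * (g (t+1) - g t) + c t))
      = 2 * A * Real.sqrt (T:ℝ) + a * (2 * Real.sqrt (T:ℝ) * Real.sqrt (U T) + U T) := by
    rw [Finset.sum_add_distrib, ← Finset.mul_sum, e1, hf0, hfT, sub_zero,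
      ← Finset.mul_sum, Finset.sum_add_distrib, ← Finset.mul_sum, e2, hg0, hgT, sub_zero, hUT]
  rw [hUT]
  have hgU : Real.sqrt (U T) ≤ A := by
    rw [hA]; exact Real.sqrt_le_sqrt (by linarith)
  have hTnn : 0 ≤ Real.sqrt (T:ℝ) := Real.sqrt_nonneg _
  have hfinal : 2 * A * Real.sqrt (T:ℝ) + a * (2 * Real.sqrt (T:ℝ) * Real.sqrt (U T) + U T)
      ≤ (2 + 2 * a) * Real.sqrt (T:ℝ) * A + a * U T := by
    nlinarith [mul_le_mul_of_nonneg_left hgU (by positivity : (0:ℝ) ≤ 2 * a * Real.sqrt (T:ℝ))]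
  calc ∑ t ∈ Finset.range T, (γ t + a * (c t / γ t))
      ≤ ∑ t ∈ Finset.range T,
        (2 * A * (f (t+1) - f t) + a * (2 * Real.sqrt (T:ℝ) * (g (t+1) - g t) + c t)) := hsum
    _ = 2 * A * Real.sqrt (T:ℝ) + a * (2 * Real.sqrt (T:ℝ) * Real.sqrt (U T) + U T) := hsum2
    _ ≤ (2 + 2 * a) * Real.sqrt (T:ℝ) * A + a * U T := hfinal
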